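/- Define ℓ'' : ℤ × ℤ → ℕ by ℓ''(m,n) = 2·max(|m|,|n|) − 1 if m+n > 0, and ℓ''(m,n) = 2·max(|m|,|n|) + 1 if m+n ≤ 0. Then for every positive integer k, the number of pairs (m,n) ∈ ℤ × ℤ with ℓ''(m,n) = 2k−1 equals 4(2k−1). -/
import Mathlib


/-- Length function on the odd coset of the elliptic Weyl group of type
`A₁⁽¹'¹⁾`. -/
def ellLen'' (p : ℤ × ℤ) : ℕ :=
  if 0 < p.1 + p.2 then 2 * max p.1.natAbs p.2.natAbs - 1
  else 2 * max p.1.natAbs p.2.natAbs + 1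

theorem stmt13 :
    ∀ k : ℕ, 0 < k →
      {p : ℤ × ℤ | ellLen'' p = 2 * k - 1}.ncard = 4 * (2 * k - 1) := by
  intro k hk
  set K : ℤ := (k : ℤ) with hK
  have hK1 : 1 ≤ K := by omega
  set S1 : Finset (ℤ × ℤ) := (Finset.Icc (1 - K) K).image (fun m => (m, K)) with hS1
  set S2 : Finset (ℤ × ℤ) := (Finset.Icc (1 - K) (K - 1)).image (fun n => (K, n)) with hS2
  set S3 : Finset (ℤ × ℤ) := (Finset.Icc (1 - K) (K - 1)).image (fun m => (m, 1 - K)) with hS3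
  set S4 : Finset (ℤ × ℤ) := (Finset.Icc (2 - K) (K - 1)).image (fun n => (1 - K, n)) with hS4
  have hset : {p : ℤ × ℤ | ellLen'' p = 2 * k - 1} = ↑(S1 ∪ S2 ∪ S3 ∪ S4) := by
    ext ⟨m, n⟩
    have h1 : m.natAbs ≤ max m.natAbs n.natAbs := le_max_left _ _
    have h2 : n.natAbs ≤ max m.natAbs n.natAbs := le_max_right _ _
    rcases max_choice m.natAbs n.natAbs with hc | hc <;>
      rw [hc] at h1 h2 <;>
      simp only [Set.mem_setOf_eq, ellLen'', hc, Finset.coe_union, Set.mem_union, hS1, hS2,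
        hS3, hS4, Finset.coe_image, Set.mem_image, Finset.mem_coe, Finset.mem_Icc,
        Prod.mk.injEq] <;>
      split_ifs with h
    · constructor
      · intro he
        rcases eq_or_ne n K with hn | hn
        · exact Or.inl (Or.inl (Or.inl ⟨m, ⟨by omega, by omega⟩, rfl, hn.symm⟩))
        · exact Or.inl (Or.inl (Or.inr ⟨n, ⟨by omega, by omega⟩, by omega, rfl⟩))
      · rintro (((⟨x, ⟨hx1, hx2⟩, rfl, rfl⟩ | ⟨x, ⟨hx1, hx2⟩, rfl, rfl⟩) |
          ⟨x, ⟨hx1, hx2⟩, rfl, rfl⟩) | ⟨x, ⟨hx1, hx2⟩, rfl, rfl⟩) <;> omega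
    · constructor
      · intro he
        rcases eq_or_ne n (1 - K) with hn | hn
        · exact Or.inl (Or.inr ⟨m, ⟨by omega, by omega⟩, rfl, hn.symm⟩)
        · exact Or.inr ⟨n, ⟨by omega, by omega⟩, by omega, rfl⟩
      · rintro (((⟨x, ⟨hx1, hx2⟩, rfl, rfl⟩ | ⟨x, ⟨hx1, hx2⟩, rfl, rfl⟩) |
          ⟨x, ⟨hx1, hx2⟩, rfl, rfl⟩) | ⟨x, ⟨hx1, hx2⟩, rfl, rfl⟩) <;> omega
    · constructor
      · intro he
        rcases eq_or_ne n K with hn | hn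
        · exact Or.inl (Or.inl (Or.inl ⟨m, ⟨by omega, by omega⟩, rfl, hn.symm⟩))
        · exact Or.inl (Or.inl (Or.inr ⟨n, ⟨by omega, by omega⟩, by omega, rfl⟩))
      · rintro (((⟨x, ⟨hx1, hx2⟩, rfl, rfl⟩ | ⟨x, ⟨hx1, hx2⟩, rfl, rfl⟩) |
          ⟨x, ⟨hx1, hx2⟩, rfl, rfl⟩) | ⟨x, ⟨hx1, hx2⟩, rfl, rfl⟩) <;> omega
    · constructor
      · intro he
        rcases eq_or_ne n (1 - K) with hn | hn
        · exact Or.inl (Or.inr ⟨m, ⟨by omega, by omega⟩, rfl, hn.symm⟩)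
        · exact Or.inr ⟨n, ⟨by omega, by omega⟩, by omega, rfl⟩
      · rintro (((⟨x, ⟨hx1, hx2⟩, rfl, rfl⟩ | ⟨x, ⟨hx1, hx2⟩, rfl, rfl⟩) |
          ⟨x, ⟨hx1, hx2⟩, rfl, rfl⟩) | ⟨x, ⟨hx1, hx2⟩, rfl, rfl⟩) <;> omega
  rw [hset, Set.ncard_coe_finset]
  have inj1 : Function.Injective (fun m : ℤ => (m, K)) := fun a b h => by
    simpa using h
  have inj2 : Function.Injective (fun n : ℤ => (K, n)) := fun a b h => by
    simpa using h
  have inj3 : Function.Injective (fun m : ℤ => (m, 1 - K)) := fun a b h => by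
    simpa using h
  have inj4 : Function.Injective (fun n : ℤ => (1 - K, n)) := fun a b h => by
    simpa using h
  have c1 : S1.card = 2 * k := by
    rw [hS1, Finset.card_image_of_injective _ inj1, Int.card_Icc]; omega
  have c2 : S2.card = 2 * k - 1 := by
    rw [hS2, Finset.card_image_of_injective _ inj2, Int.card_Icc]; omega
  have c3 : S3.card = 2 * k - 1 := by
    rw [hS3, Finset.card_image_of_injective _ inj3, Int.card_Icc]; omega
  have c4 : S4.card = 2 * k - 2 := by
    rw [hS4, Finset.card_image_of_injective _ inj4, Int.card_Icc]; omega
  have d12 : Disjoint S1 S2 := by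
    rw [Finset.disjoint_left]
    rintro ⟨a, b⟩ hp hq
    simp only [hS1, hS2, Finset.mem_image, Finset.mem_Icc, Prod.mk.injEq] at hp hq
    obtain ⟨x, hx, rfl, rfl⟩ := hp
    obtain ⟨y, hy, h1, h2⟩ := hq
    omega
  have d13 : Disjoint S1 S3 := by
    rw [Finset.disjoint_left]
    rintro ⟨a, b⟩ hp hq
    simp only [hS1, hS3, Finset.mem_image, Finset.mem_Icc, Prod.mk.injEq] at hp hq
    obtain ⟨x, hx, rfl, rfl⟩ := hp
    obtain ⟨y, hy, h1, h2⟩ := hq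
    omega
  have d14 : Disjoint S1 S4 := by
    rw [Finset.disjoint_left]
    rintro ⟨a, b⟩ hp hq
    simp only [hS1, hS4, Finset.mem_image, Finset.mem_Icc, Prod.mk.injEq] at hp hq
    obtain ⟨x, hx, rfl, rfl⟩ := hp
    obtain ⟨y, hy, h1, h2⟩ := hq
    omega
  have d23 : Disjoint S2 S3 := by
    rw [Finset.disjoint_left]
    rintro ⟨a, b⟩ hp hq
    simp only [hS2, hS3, Finset.mem_image, Finset.mem_Icc, Prod.mk.injEq] at hp hq
    obtain ⟨x, hx, rfl, rfl⟩ := hp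
    obtain ⟨y, hy, h1, h2⟩ := hq
    omega
  have d24 : Disjoint S2 S4 := by
    rw [Finset.disjoint_left]
    rintro ⟨a, b⟩ hp hq
    simp only [hS2, hS4, Finset.mem_image, Finset.mem_Icc, Prod.mk.injEq] at hp hq
    obtain ⟨x, hx, rfl, rfl⟩ := hp
    obtain ⟨y, hy, h1, h2⟩ := hq
    omega
  have d34 : Disjoint S3 S4 := by
    rw [Finset.disjoint_left]
    rintro ⟨a, b⟩ hp hq
    simp only [hS3, hS4, Finset.mem_image, Finset.mem_Icc, Prod.mk.injEq] at hp hq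
    obtain ⟨x, hx, rfl, rfl⟩ := hp
    obtain ⟨y, hy, h1, h2⟩ := hq
    omega
  rw [Finset.card_union_of_disjoint (by
      simp only [Finset.disjoint_union_left]
      exact ⟨⟨d14, d24⟩, d34⟩),
    Finset.card_union_of_disjoint (by
      simp only [Finset.disjoint_union_left]
      exact ⟨d13, d23⟩),
    Finset.card_union_of_disjoint d12, c1, c2, c3, c4]
  omega
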